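/- Let V be a finite-dimensional representation of sl(2,ℂ) isomorphic to a direct sum of copies of the 2-dimensional irreducible representation (i.e., of pure weight 1). Let R be the set of r ∈ sl(2,ℂ) with dim(r·V) = (1/2)·dim V. If ξ ∈ Λ²V* is an sl(2,ℂ)-invariant alternating 2-form which vanishes on (x·V) × (y·V) for two distinct elements x, y ∈ ℙR, then ξ = 0. -/

import Mathlib

/-- Key algebraic fact: if `x = [[p,q],[r,-p]]` and `y = [[a,b],[c,-a]]` are traceless
`2×2` matrices with zero determinant (`p² + qr = 0`, `a² + bc = 0`) and `tr(xy) = 0`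
(`2pa + qc + rb = 0`), and `x ≠ 0`, then `y` is proportional to `x`. -/
lemma key_prop (p q r a b c : ℂ) (hx : p^2 + q*r = 0) (hy : a^2 + b*c = 0)
    (ht : 2*p*a + q*c + r*b = 0) (hne : ¬(p = 0 ∧ q = 0 ∧ r = 0)) :
    ∃ t : ℂ, a = t*p ∧ b = t*q ∧ c = t*r := by
  by_cases hq : q = 0
  · have hp : p = 0 := by
      have h2 : p^2 = 0 := by linear_combination hx - r*hq
      exact pow_eq_zero_iff two_ne_zero |>.mp h2
    have hr : r ≠ 0 := fun hr => hne ⟨hp, hq, hr⟩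
    have hb : b = 0 := by
      have : r * b = 0 := by linear_combination ht - 2*a*hp - c*hq
      exact (mul_eq_zero.mp this).resolve_left hr
    have ha : a = 0 := by
      have h2 : a^2 = 0 := by linear_combination hy - c*hb
      exact pow_eq_zero_iff two_ne_zero |>.mp h2
    exact ⟨c/r, by rw [ha, hp, mul_zero], by rw [hb, hq, mul_zero], by field_simp⟩
  · have hprod : (q*a - p*b) * (r*a - p*c) = 0 := by
      linear_combination a^2*hx + p^2*hy - p*a*ht
    have h1 : q*a = p*b := by
      rcases mul_eq_zero.mp hprod with h | h
      · linear_combination h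
      · by_cases hp : p = 0
        · have hr : r = 0 := by
            have : q * r = 0 := by linear_combination hx - (p+0)*hp
            exact (mul_eq_zero.mp this).resolve_left hq
          have hc : c = 0 := by
            have : q * c = 0 := by linear_combination ht - 2*a*hp - b*hr
            exact (mul_eq_zero.mp this).resolve_left hq
          have ha : a = 0 := by
            have h2 : a^2 = 0 := by linear_combination hy - b*hc
            exact pow_eq_zero_iff two_ne_zero |>.mp h2
          rw [ha, hp]; ring
        · have hpa : p*a + r*b = 0 := by
            have : p * (p*a + r*b) = 0 := by linear_combination p*ht + q*h - a*hx
            exact (mul_eq_zero.mp this).resolve_left hp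
          have hr : r ≠ 0 := by
            intro hr
            exact hp (pow_eq_zero_iff two_ne_zero |>.mp
              (by linear_combination hx - q*hr : p^2 = 0))
          have : r * (q*a - p*b) = 0 := by linear_combination a*hx - p*hpa
          have := (mul_eq_zero.mp this).resolve_left hr
          linear_combination this
    refine ⟨b/q, ?_, by field_simp, ?_⟩
    · field_simp; linear_combination h1
    · have h2 : q * (c*q) = q * (b*r) := by
        linear_combination q*ht - 2*p*h1 - 2*b*hx
      have := mul_left_cancel₀ hq h2
      field_simp; linear_combination this

/-- For traceless `2×2` matrices, `xy + yx = tr(xy)·I`. -/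
lemma anticomm (x y : Matrix (Fin 2) (Fin 2) ℂ) (hx : x.trace = 0) (hy : y.trace = 0) :
    x * y + y * x = (x * y).trace • (1 : Matrix (Fin 2) (Fin 2) ℂ) := by
  rw [Matrix.trace_fin_two] at hx hy
  ext i j
  fin_cases i <;> fin_cases j <;>
    simp [Matrix.mul_apply, Fin.sum_univ_two, Matrix.trace_fin_two, Matrix.one_apply]
  · linear_combination y 0 0 * hx - x 1 1 * hy
  · linear_combination y 0 1 * hx + x 0 1 * hy
  · linear_combination y 1 0 * hx + x 1 0 * hy
  · linear_combination x 1 1 * hy - y 0 0 * hx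

/-- The diagonal action of a `2×2` matrix (an element of `sl(2,ℂ)` when traceless)
on `V = (ℂ²)^⊕n`, the direct sum of `n` copies of the standard representation. -/
noncomputable def act (n : ℕ) (r : Matrix (Fin 2) (Fin 2) ℂ) :
    (Fin n → Fin 2 → ℂ) →ₗ[ℂ] (Fin n → Fin 2 → ℂ) :=
  LinearMap.pi fun i => (Matrix.mulVecLin r).comp (LinearMap.proj i)

lemma act_apply (n : ℕ) (r : Matrix (Fin 2) (Fin 2) ℂ) (v : Fin n → Fin 2 → ℂ) (i : Fin n) :
    act n r v i = r.mulVec (v i) := rfl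

lemma act_act (n : ℕ) (a b : Matrix (Fin 2) (Fin 2) ℂ) (v : Fin n → Fin 2 → ℂ) :
    act n a (act n b v) = act n (a * b) v := by
  funext i
  simp only [act_apply, Matrix.mulVec_mulVec]

lemma act_smul_one (n : ℕ) (t : ℂ) (v : Fin n → Fin 2 → ℂ) :
    act n (t • 1) v = t • v := by
  funext i
  simp only [act_apply, Matrix.smul_mulVec, Matrix.one_mulVec, Pi.smul_apply]

lemma act_add (n : ℕ) (a b : Matrix (Fin 2) (Fin 2) ℂ) (v : Fin n → Fin 2 → ℂ) :
    act n (a + b) v = act n a v + act n b v := by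
  funext i
  simp [act_apply, Matrix.add_mulVec]

lemma act_ne_zero (n : ℕ) (hn : n ≠ 0) (x : Matrix (Fin 2) (Fin 2) ℂ)
    (hxR : Module.finrank ℂ (LinearMap.range (act n x)) = n) : x ≠ 0 := by
  intro h
  subst h
  have h0 : act n (0 : Matrix (Fin 2) (Fin 2) ℂ) = 0 := by
    apply LinearMap.ext; intro v; funext i; simp [act_apply]
  rw [h0, LinearMap.range_zero, finrank_bot] at hxR
  exact hn hxR.symm

lemma act_det_zero (n : ℕ) (hn : n ≠ 0) (x : Matrix (Fin 2) (Fin 2) ℂ)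
    (hxR : Module.finrank ℂ (LinearMap.range (act n x)) = n) : x.det = 0 := by
  by_contra hdet
  have hsurj : Function.Surjective (act n x) := by
    intro w
    exact ⟨fun i => x⁻¹.mulVec (w i), by
      funext i
      rw [act_apply, Matrix.mulVec_mulVec,
        Matrix.mul_nonsing_inv x (isUnit_iff_ne_zero.mpr hdet), Matrix.one_mulVec]⟩
  rw [LinearMap.range_eq_top.mpr hsurj] at hxR
  have h2 : Module.finrank ℂ (Fin n → Fin 2 → ℂ) = n * 2 := by
    simp [Module.finrank_pi_fintype]
  rw [finrank_top, h2] at hxR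
  omega

/-- Let `V ≅ H^⊕n` be a direct sum of copies of the standard representation of
`sl(2,ℂ)`, and let `R` be the set of `r ∈ sl(2,ℂ)` with `dim (r·V) = n = ½ dim V`.
If `ξ` is an `sl(2,ℂ)`-invariant alternating 2-form on `V` vanishing on
`(x·V) × (y·V)` for two distinct `x, y ∈ ℙR`, then `ξ = 0`. -/
theorem stmt2 (n : ℕ) (x y : Matrix (Fin 2) (Fin 2) ℂ)
    (hx : x.trace = 0) (hy : y.trace = 0)
    (hxR : Module.finrank ℂ (LinearMap.range (act n x)) = n)
    (hyR : Module.finrank ℂ (LinearMap.range (act n y)) = n)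
    (hdist : ¬ ∃ c : ℂ, y = c • x)
    (ξ : (Fin n → Fin 2 → ℂ) →ₗ[ℂ] (Fin n → Fin 2 → ℂ) →ₗ[ℂ] ℂ)
    (halt : ∀ v, ξ v v = 0)
    (hinv : ∀ g : Matrix (Fin 2) (Fin 2) ℂ, g.trace = 0 →
      ∀ v w, ξ (act n g v) w + ξ v (act n g w) = 0)
    (hvan : ∀ v w, ξ (act n x v) (act n y w) = 0) :
    ξ = 0 := by
  rcases eq_or_ne n 0 with hn | hn
  · subst hn
    apply LinearMap.ext; intro v; apply LinearMap.ext; intro w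
    have hv : v = 0 := funext fun i => i.elim0
    rw [hv, map_zero, LinearMap.zero_apply]
    simp
  -- x, y are nonzero with zero determinant
  have hxne := act_ne_zero n hn x hxR
  have hyne := act_ne_zero n hn y hyR
  have hxdet := act_det_zero n hn x hxR
  have hydet := act_det_zero n hn y hyR
  -- the trace of x*y is nonzero
  have htne : (x * y).trace ≠ 0 := by
    intro ht
    apply hdist
    rw [Matrix.trace_fin_two] at hx hy ht
    rw [Matrix.det_fin_two] at hxdet hydet
    rw [Matrix.mul_apply, Matrix.mul_apply, Fin.sum_univ_two, Fin.sum_univ_two] at ht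
    have hx11 : x 1 1 = -x 0 0 := by linear_combination hx
    have hy11 : y 1 1 = -y 0 0 := by linear_combination hy
    have hX : (x 0 0)^2 + (x 0 1) * (x 1 0) = 0 := by
      linear_combination x 0 0 * hx - hxdet
    have hY : (y 0 0)^2 + (y 0 1) * (y 1 0) = 0 := by
      linear_combination y 0 0 * hy - hydet
    have hT : 2 * x 0 0 * y 0 0 + x 0 1 * (y 1 0) + x 1 0 * (y 0 1) = 0 := by
      linear_combination ht + y 0 0 * hx - x 1 1 * hy
    have hne2 : ¬(x 0 0 = 0 ∧ x 0 1 = 0 ∧ x 1 0 = 0) := by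
      rintro ⟨h1, h2, h3⟩
      apply hxne
      ext i j
      fin_cases i <;> fin_cases j <;> simp only [Matrix.zero_apply]
      · exact h1
      · exact h2
      · exact h3
      · show x 1 1 = 0
        rw [hx11, h1, neg_zero]
    obtain ⟨t, ha, hb, hc⟩ := key_prop (x 0 0) (x 0 1) (x 1 0)
      (y 0 0) (y 0 1) (y 1 0) hX hY hT hne2
    refine ⟨t, ?_⟩
    ext i j
    fin_cases i <;> fin_cases j <;>
      simp only [Matrix.smul_apply, smul_eq_mul]
    · show y 0 0 = t * x 0 0
      exact ha
    · show y 0 1 = t * x 0 1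
      exact hb
    · show y 1 0 = t * x 1 0
      exact hc
    · show y 1 1 = t * x 1 1
      rw [hy11, hx11, ha]; ring
  -- antisymmetry of ξ
  have hanti : ∀ v w, ξ v w = -ξ w v := by
    intro v w
    have h := halt (v + w)
    simp only [map_add, LinearMap.add_apply] at h
    rw [halt v, halt w] at h
    linear_combination h
  -- ξ also vanishes on y·V × x·V
  have hvan' : ∀ v w, ξ (act n y v) (act n x w) = 0 := by
    intro v w
    rw [hanti]
    rw [hvan w v]
    ring
  -- the two composed actions kill ξ
  have hxy : ∀ v w, ξ (act n x (act n y v)) w = 0 := by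
    intro v w
    have h := hinv x hx (act n y v) w
    rw [hvan' v w] at h
    linear_combination h
  have hyx : ∀ v w, ξ (act n y (act n x v)) w = 0 := by
    intro v w
    have h := hinv y hy (act n x v) w
    rw [hvan v w] at h
    linear_combination h
  -- conclude
  apply LinearMap.ext; intro v; apply LinearMap.ext; intro w
  have hkey : (x * y).trace • v = act n x (act n y v) + act n y (act n x v) := by
    rw [act_act, act_act, ← act_add, anticomm x y hx hy, act_smul_one]
  have h0 : (x * y).trace * ξ v w = 0 := by
    have := congrArg (fun u => ξ u w) hkey
    simp only [map_smul, LinearMap.smul_apply, map_add, LinearMap.add_apply,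
      smul_eq_mul] at this
    rw [hxy v w, hyx v w] at this
    linear_combination this
  have := mul_eq_zero.mp h0
  simpa [htne] using this
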